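/- The machine M computes the constant-zero function on unary inputs: for every k there exists an n such that the n-th iterate of the step function on init_k is the configuration (Q3, fun _ => false, 1), i.e., M halts on input 0 1^k with all tape cells equal to 0, scanning the second cell. -/
import Mathlib


/-- Configurations of the 3-state Turing machine: (state, tape, head position). -/
abbrev Config : Type := Fin 3 × (ℕ → Bool) × ℕ

/-- The total step function of the machine M. State 0 = Q1, 1 = Q2, 2 = Q3 (halt). -/
def step (c : Config) : Config :=
  match c with
  | (q, T, p) =>
    if q = 0 then (if T p then (0, T, p + 1) else (1, T, p - 1))
    else if q = 1 then
      (if T p then (1, Function.update T p false, p - 1) else (2, T, p + 1))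
    else (2, T, p)

/-- The input tape 0 1^k 0 0 ⋯ : cell i holds 1 iff 1 ≤ i ≤ k. -/
def tape (k : ℕ) : ℕ → Bool := fun i => decide (1 ≤ i ∧ i ≤ k)

/-- Initial configuration on input 0 1^k: state Q1, scanning cell 1. -/
def init (k : ℕ) : Config := (0, tape k, 1)

lemma tape_update (m : ℕ) : Function.update (tape (m + 1)) (m + 1) false = tape m := by
  funext i
  rcases eq_or_ne i (m + 1) with h | h
  · subst h
    simp [Function.update, tape]
  · simp only [Function.update, dif_neg h, tape]
    simp only [decide_eq_decide]
    omega

lemma phase1 (k : ℕ) : ∀ j, j ≤ k → step^[j] (init k) = (0, tape k, 1 + j) := by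
  intro j
  induction j with
  | zero => intro _; simp [init]
  | succ j ih =>
    intro hj
    rw [Function.iterate_succ_apply', ih (by omega)]
    have ht : tape k (1 + j) = true := by simp [tape]; omega
    simp [step, ht]
    omega

lemma phase2 (m : ℕ) : step^[m] (1, tape m, m) = (1, tape 0, 0) := by
  induction m with
  | zero => rfl
  | succ m ih =>
    rw [Function.iterate_succ_apply]
    have ht : tape (m + 1) (m + 1) = true := by simp [tape]
    have : step (1, tape (m + 1), m + 1) = (1, tape m, m) := by
      simp [step, ht, tape_update]
    rw [this, ih]

/-- M computes the constant-zero function on unary inputs: on input 0 1^k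
it halts with an all-zero tape, scanning the second tape cell. -/
theorem computes_constant_zero (k : ℕ) :
    ∃ n, step^[n] (init k) = (2, fun _ => false, 1) := by
  refine ⟨(k + 1) + (k + 1), ?_⟩
  have h1 : step^[k + 1] (init k) = (1, tape k, k) := by
    rw [Function.iterate_succ_apply', phase1 k k le_rfl]
    have ht : tape k (1 + k) = false := by simp [tape]
    simp [step, ht]
  rw [Function.iterate_add_apply, h1, Function.iterate_succ_apply', phase2 k]
  have ht : tape 0 0 = false := by simp [tape]
  have h0 : tape 0 = fun _ => false := by funext i; simp [tape]; omega
  simp [step, ht, h0]
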